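/- Let n be even and let σ be the permutation of {1,…,n} with σ(2j−1)=2j and σ(2j)=2j−1 for all j. Then for every k ∈ {0,…,n}, the sign vector v_k : Fin n → {−1,1} defined by v_k(i) = 1 if σ(i+1) > k and −1 otherwise has at most 3 sign changes. (Hence S2(n) ⊆ S1(n): every tope of the rank-2 oriented matroid M2 is a tope of the rank-4 alternating oriented matroid M1, so by the tope criterion for strong maps there is a strong map f : M1 → M2.) -/

import Mathlib

/-- The number of sign changes of `v`. -/
def signChanges {n : ℕ} (v : Fin n → ℤ) : ℕ :=
  (Finset.univ.filter
    (fun i : Fin (n - 1) =>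
      v ⟨i.val, by omega⟩ ≠ v ⟨i.val + 1, by omega⟩)).card

/-- The permutation σ of `{1,…,n}` (on values) swapping `2j-1` and `2j`. -/
def pairSwap (m : ℕ) : ℕ := if m % 2 = 1 then m + 1 else m - 1

/-- The tope `v_k` of the rank-2 oriented matroid `M₂`. -/
def vk (n k : ℕ) : Fin n → ℤ := fun i => if k < pairSwap (i.val + 1) then 1 else -1

lemma pairSwap_bounds (m : ℕ) : m - 1 ≤ pairSwap m ∧ pairSwap m ≤ m + 1 := by
  unfold pairSwap; split <;> omega

/-- Every tope `v_k` of the rank-2 oriented matroid `M₂` has at most 3 sign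
changes, hence is a tope of the rank-4 alternating oriented matroid `M₁`. -/
theorem vk_signChanges_le_three (n : ℕ) (hn : Even n) (k : ℕ) (hk : k ≤ n) :
    signChanges (vk n k) ≤ 3 := by
  classical
  unfold signChanges
  have hsub : ∀ i : Fin (n - 1),
      vk n k ⟨i.val, by omega⟩ ≠ vk n k ⟨i.val + 1, by omega⟩ →
      k ≤ i.val + 2 ∧ i.val ≤ k := by
    intro i hne
    by_contra hc
    have b1 := pairSwap_bounds (i.val + 1)
    have b2 := pairSwap_bounds (i.val + 1 + 1)
    apply hne
    have hiff : (k < pairSwap (i.val + 1)) ↔ (k < pairSwap (i.val + 1 + 1)) := by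
      push_neg at hc
      omega
    simp only [vk]
    exact if_congr hiff rfl rfl
  calc (Finset.univ.filter
      (fun i : Fin (n - 1) =>
        vk n k ⟨i.val, by omega⟩ ≠ vk n k ⟨i.val + 1, by omega⟩)).card
      ≤ (Finset.Icc (k - 2) k).card := by
        apply Finset.card_le_card_of_injOn Fin.val
        · intro i hi
          simp only [Finset.mem_coe, Finset.mem_filter, Finset.mem_univ, true_and] at hi
          have := hsub i hi
          simp only [Finset.mem_coe, Finset.mem_Icc]
          omega
        · intro a _ b _ h
          exact Fin.val_injective h
    _ ≤ 3 := by
        rw [Nat.card_Icc]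
        omega
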